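/- For an even integer k ≥ 6, let B be the k×k tridiagonal matrix described below. Then the set of main eigenvalues of B, i.e., the set of real numbers λ for which there exists η ∈ ℝ^k with Bᵀ η = λ η and e_kᵀ η ≠ 0, has at most k−1 elements. -/

import Mathlib

open Matrix Finset

/-- The `k × k` tridiagonal matrix with zero diagonal, all subdiagonal entries `1`,
and superdiagonal entries `5, k-4, 4, 2, 1, 1, …, 1` (0-indexed: row `i` has
superdiagonal entry `B i (i+1)`). -/
noncomputable def divisorMatrix (k : ℕ) : Matrix (Fin k) (Fin k) ℝ :=
  Matrix.of fun i j =>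
    if (j : ℕ) = (i : ℕ) + 1 then
      (if (i : ℕ) = 0 then 5
       else if (i : ℕ) = 1 then (k : ℝ) - 4
       else if (i : ℕ) = 2 then 4
       else if (i : ℕ) = 3 then 2
       else 1)
    else if (i : ℕ) = (j : ℕ) + 1 then 1 else 0

/-- superdiagonal entry of row `j` -/
noncomputable def supf (k : ℕ) (j : ℕ) : ℝ :=
  if j = 0 then 5 else if j = 1 then (k : ℝ) - 4 else if j = 2 then 4
  else if j = 3 then 2 else 1

noncomputable def wf (k : ℕ) (j : ℕ) : ℝ :=
  if j = 0 then 1 else if j = 1 then -2 else if j = 2 then -1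
  else if j = 3 then 2 * ((k : ℝ) - 3)
  else 4 * (-1) ^ (j + 1) * ((k : ℝ) - j)

lemma mulVec_key (k : ℕ) (v : ℕ → ℝ) (i : Fin k) :
    ((divisorMatrix k)ᵀ.mulVec (fun j : Fin k => v (j : ℕ))) i =
      (if (i : ℕ) = 0 then 0 else supf k ((i : ℕ) - 1) * v ((i : ℕ) - 1)) +
      (if (i : ℕ) + 1 < k then v ((i : ℕ) + 1) else 0) := by
  have hentry : ∀ j : Fin k, (divisorMatrix k)ᵀ i j * v (j : ℕ) =
      (if (i : ℕ) = (j : ℕ) + 1 then supf k (j : ℕ) * v (j : ℕ) else 0) +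
      (if (j : ℕ) = (i : ℕ) + 1 then v (j : ℕ) else 0) := by
    intro j
    simp only [transpose_apply, divisorMatrix, of_apply, supf]
    split_ifs <;> first | (exfalso; omega) | ring
  unfold mulVec dotProduct
  rw [Finset.sum_congr rfl fun j _ => hentry j, Finset.sum_add_distrib]
  congr 1
  · rcases Nat.eq_zero_or_pos (i : ℕ) with h0 | h0
    · rw [if_pos h0]
      apply Finset.sum_eq_zero
      intro j _
      rw [if_neg (by omega)]
    · have hcond : ∀ j : Fin k, ((i : ℕ) = (j : ℕ) + 1) ↔ (j = ⟨(i : ℕ) - 1, by omega⟩) := by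
        intro j; constructor
        · intro h; ext; simp; omega
        · intro h; subst h; simp; omega
      rw [Finset.sum_congr rfl fun j _ => by rw [if_congr (hcond j) rfl rfl]]
      rw [Finset.sum_ite_eq' Finset.univ (⟨(i : ℕ) - 1, by omega⟩ : Fin k)]
      rw [if_pos (Finset.mem_univ _), if_neg (by omega)]
  · rcases Nat.lt_or_ge ((i : ℕ) + 1) k with h | h
    · have hcond : ∀ j : Fin k, ((j : ℕ) = (i : ℕ) + 1) ↔ (j = ⟨(i : ℕ) + 1, h⟩) := by
        intro j; constructor
        · intro hh; ext; simpa using hh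
        · intro hh; subst hh; simp
      rw [Finset.sum_congr rfl fun j _ => by rw [if_congr (hcond j) rfl rfl]]
      rw [Finset.sum_ite_eq' Finset.univ (⟨(i : ℕ) + 1, h⟩ : Fin k)]
      simp [h]
    · rw [if_neg (by omega)]
      apply Finset.sum_eq_zero
      intro j _
      rw [if_neg (by have := j.isLt; omega)]

lemma wf_eigen (k : ℕ) (hk6 : 6 ≤ k) :
    (divisorMatrix k)ᵀ.mulVec (fun j : Fin k => wf k (j : ℕ)) =
      (-2 : ℝ) • (fun j : Fin k => wf k (j : ℕ)) := by
  funext i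
  rw [show ((-2 : ℝ) • (fun j : Fin k => wf k (j : ℕ))) i = -2 * wf k (i : ℕ) from rfl,
    mulVec_key]
  have hn : (i : ℕ) < k := i.isLt
  rcases Nat.lt_or_ge (i : ℕ) 5 with h5 | h5
  · have hcast : ((4 : ℕ) : ℝ) = 4 := by norm_num
    rcases (by omega : (i:ℕ)=0 ∨ (i:ℕ)=1 ∨ (i:ℕ)=2 ∨ (i:ℕ)=3 ∨ (i:ℕ)=4) with h|h|h|h|h <;>
      simp only [h] <;>
      [skip;
       rw [if_neg (by omega), if_pos (by omega : 1+1 < k)];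
       rw [if_neg (by omega), if_pos (by omega : 2+1 < k)];
       rw [if_neg (by omega), if_pos (by omega : 3+1 < k)];
       rw [if_neg (by omega), if_pos (by omega : 4+1 < k)]] <;>
      simp [wf, supf, show 1 < k by omega] <;> norm_num <;> ring
  · rcases Nat.lt_or_ge ((i : ℕ) + 1) k with hmid | hlast
    · -- middle: 5 ≤ n ≤ k - 2
      set n := (i : ℕ) with hdefn
      rw [if_neg (by omega), if_pos hmid]
      have hsup : supf k (n - 1) = 1 := by
        unfold supf; rw [if_neg (by omega), if_neg (by omega), if_neg (by omega),
          if_neg (by omega)]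
      have hw1 : wf k (n - 1) = 4 * (-1 : ℝ) ^ n * ((k : ℝ) - n + 1) := by
        unfold wf
        rw [if_neg (by omega), if_neg (by omega), if_neg (by omega), if_neg (by omega),
          show n - 1 + 1 = n by omega]
        have : ((n - 1 : ℕ) : ℝ) = (n : ℝ) - 1 := by
          push_cast [Nat.cast_sub (by omega : 1 ≤ n)]; ring
        rw [this]; ring
      have hw2 : wf k (n + 1) = 4 * (-1 : ℝ) ^ n * ((k : ℝ) - n - 1) := by
        unfold wf
        rw [if_neg (by omega), if_neg (by omega), if_neg (by omega), if_neg (by omega)]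
        push_cast
        rw [show n + 1 + 1 = n + 2 by ring, pow_add]
        ring
      have hw0 : wf k n = -(4 * (-1 : ℝ) ^ n * ((k : ℝ) - n)) := by
        unfold wf
        rw [if_neg (by omega), if_neg (by omega), if_neg (by omega), if_neg (by omega),
          pow_succ]
        ring
      rw [hsup, hw1, hw2, hw0]; ring
    · -- last index: n = k - 1
      have hkn : (i : ℕ) = k - 1 := by omega
      rw [if_neg (by omega), if_neg (by omega), hkn]
      have h1 : k - 1 - 1 = k - 2 := by omega
      have hsup : supf k (k - 2) = 1 := by
        unfold supf; rw [if_neg (by omega), if_neg (by omega), if_neg (by omega),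
          if_neg (by omega)]
      have hw1 : wf k (k - 2) = 4 * (-1 : ℝ) ^ (k - 1) * 2 := by
        unfold wf
        rw [if_neg (by omega), if_neg (by omega), if_neg (by omega), if_neg (by omega),
          show k - 2 + 1 = k - 1 by omega]
        have : ((k - 2 : ℕ) : ℝ) = (k : ℝ) - 2 := by
          push_cast [Nat.cast_sub (by omega : 2 ≤ k)]; ring
        rw [this]; ring
      have hw0 : wf k (k - 1) = -(4 * (-1 : ℝ) ^ (k - 1)) := by
        unfold wf
        rw [if_neg (by omega), if_neg (by omega), if_neg (by omega), if_neg (by omega),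
          show k - 1 + 1 = k by omega,
          show ((-1 : ℝ)) ^ k = -(-1 : ℝ) ^ (k - 1) from by
            rw [show k = (k - 1) + 1 by omega, pow_succ]
            rw [show (k - 1) + 1 - 1 = k - 1 by omega]; ring]
        have hc : ((k - 1 : ℕ) : ℝ) = (k : ℝ) - 1 := by
          push_cast [Nat.cast_sub (by omega : 1 ≤ k)]; ring
        rw [hc]; ring
      rw [h1, hsup, hw1, hw0]; ring

lemma wf_sum (k : ℕ) (hk : Even k) (hk6 : 6 ≤ k) :
    ∑ i : Fin k, wf k (i : ℕ) = 0 := by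
  rw [Fin.sum_univ_eq_sum_range]
  have hsplit : ∑ j ∈ Finset.range k, wf k j =
      (∑ j ∈ Finset.range 4, wf k j) + ∑ j ∈ Finset.Ico 4 k, wf k j := by
    rw [Finset.range_eq_Ico, ← Finset.sum_Ico_consecutive _ (by omega : 0 ≤ 4)
      (by omega : 4 ≤ k), Finset.range_eq_Ico]
  set G : ℕ → ℝ := fun j => (-1 : ℝ) ^ j * (2 * ((k : ℝ) - j) + 1) with hG
  have htel : ∑ j ∈ Finset.Ico 4 k, wf k j = G k - G 4 := by
    have hterm : ∀ j ∈ Finset.Ico 4 k, wf k j = G (j + 1) - G j := by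
      intro j hj
      rw [Finset.mem_Ico] at hj
      unfold wf
      rw [if_neg (by omega), if_neg (by omega), if_neg (by omega), if_neg (by omega), hG]
      push_cast
      rw [pow_succ]
      ring
    rw [Finset.sum_congr rfl hterm, Finset.sum_Ico_eq_sub _ (by omega : 4 ≤ k),
      Finset.sum_range_sub, Finset.sum_range_sub]
    ring
  have hGk : G k = 1 := by
    rw [hG]; simp [Even.neg_one_pow hk]
  have hG4 : G 4 = 2 * (k : ℝ) - 7 := by rw [hG]; norm_num; ring
  have hhead : ∑ j ∈ Finset.range 4, wf k j = 2 * (k : ℝ) - 8 := by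
    rw [show (4 : ℕ) = 3 + 1 from rfl, Finset.sum_range_succ, Finset.sum_range_succ,
      Finset.sum_range_succ, Finset.sum_range_one]
    unfold wf; norm_num; ring
  rw [hsplit, htel, hGk, hG4, hhead]; ring

lemma eig_neg2_sum_zero (k : ℕ) (hk : Even k) (hk6 : 6 ≤ k) (η : Fin k → ℝ)
    (hη : (divisorMatrix k)ᵀ.mulVec η = (-2 : ℝ) • η) : ∑ i, η i = 0 := by
  set c : ℝ := η ⟨0, by omega⟩ with hc
  set w : Fin k → ℝ := fun j : Fin k => wf k (j : ℕ) with hw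
  set d : Fin k → ℝ := η - c • w with hd
  set D : ℕ → ℝ := fun n => if h : n < k then d ⟨n, h⟩ else 0 with hD
  have hdD : (fun j : Fin k => D (j : ℕ)) = d := by
    funext j; rw [hD]; simp only [j.isLt, dif_pos]
  have hde : (divisorMatrix k)ᵀ.mulVec d = (-2 : ℝ) • d := by
    rw [hd, Matrix.mulVec_sub, hη, Matrix.mulVec_smul, hw, wf_eigen k hk6]
    ext j; simp; ring
  have hrec : ∀ i : Fin k,
      (if (i : ℕ) = 0 then 0 else supf k ((i : ℕ) - 1) * D ((i : ℕ) - 1)) +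
      (if (i : ℕ) + 1 < k then D ((i : ℕ) + 1) else 0) = -2 * D (i : ℕ) := by
    intro i
    have := congrFun hde i
    rw [← hdD] at this
    rw [mulVec_key] at this
    rw [this, hdD]
    simp only [Pi.smul_apply, smul_eq_mul]
    rw [hD]; simp only [i.isLt, dif_pos]
  have hD0 : D 0 = 0 := by
    rw [hD]; simp only [dif_pos (by omega : 0 < k)]
    rw [hd]; simp [hw, wf, hc]
  have hDall : ∀ n, D n = 0 := by
    intro n
    induction n using Nat.strong_induction_on with
    | _ n ih =>
      rcases Nat.lt_or_ge n k with hnk | hnk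
      · match n, hnk with
        | 0, _ => exact hD0
        | (m + 1), hmk =>
          have heq := hrec ⟨m, by omega⟩
          simp only at heq
          rw [if_pos hmk] at heq
          have h1 : D m = 0 := ih m (by omega)
          have h2 : (if m = 0 then (0 : ℝ) else supf k (m - 1) * D (m - 1)) = 0 := by
            by_cases hm : m = 0
            · rw [if_pos hm]
            · rw [if_neg hm, ih (m - 1) (by omega), mul_zero]
          rw [h1, h2] at heq
          linarith
      · rw [hD]; simp only [dif_neg (by omega : ¬ n < k)]
  have hη_eq : ∀ j : Fin k, η j = c * w j := by
    intro j
    have : d j = 0 := by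
      have := hDall (j : ℕ)
      rw [hD] at this; simp only [j.isLt, dif_pos] at this
      simpa using this
    have h2 : η j - c * w j = 0 := by
      have h3 := this; rw [hd] at h3; simpa using h3
    linarith
  calc ∑ i, η i = ∑ i, c * w i := Finset.sum_congr rfl fun i _ => hη_eq i
    _ = c * ∑ i : Fin k, wf k (i : ℕ) := by rw [Finset.mul_sum]
    _ = 0 := by rw [wf_sum k hk hk6, mul_zero]

/-- For even `k ≥ 6`, the set of main eigenvalues of `B` — the real `λ`
admitting `η ∈ ℝ^k` with `Bᵀ η = λ η` and `e_kᵀ η ≠ 0` — has at most `k - 1` elements. -/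
theorem divisor_main_eigenvalues_at_most (k : ℕ) (hk : Even k) (hk6 : 6 ≤ k) :
    {lam : ℝ | ∃ η : Fin k → ℝ,
        (divisorMatrix k)ᵀ.mulVec η = lam • η ∧ ∑ i, η i ≠ 0}.Finite ∧
      {lam : ℝ | ∃ η : Fin k → ℝ,
        (divisorMatrix k)ᵀ.mulVec η = lam • η ∧ ∑ i, η i ≠ 0}.ncard ≤ k - 1 := by
  set S : Set ℝ := {lam : ℝ | ∃ η : Fin k → ℝ,
    (divisorMatrix k)ᵀ.mulVec η = lam • η ∧ ∑ i, η i ≠ 0} with hS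
  set f : Module.End ℝ (Fin k → ℝ) := Matrix.mulVecLin (divisorMatrix k)ᵀ with hf
  have hneg2 : (-2 : ℝ) ∉ S := by
    rintro ⟨η, hη, hsum⟩
    exact hsum (eig_neg2_sum_zero k hk hk6 η hη)
  set T : Set ℝ := insert (-2 : ℝ) S with hT
  have hw_ne : (fun j : Fin k => wf k (j : ℕ)) ≠ 0 := by
    intro h
    have := congrFun h ⟨0, by omega⟩
    simp [wf] at this
  have hex : ∀ μ : T, ∃ x : Fin k → ℝ, f.HasEigenvector (μ : ℝ) x := by
    rintro ⟨μ, hμ⟩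
    rcases Set.mem_insert_iff.mp hμ with h | h
    · subst h
      refine ⟨fun j : Fin k => wf k (j : ℕ), Module.End.mem_eigenspace_iff.mpr ?_, hw_ne⟩
      rw [hf, Matrix.mulVecLin_apply, wf_eigen k hk6]
    · obtain ⟨η, hη, hsum⟩ := h
      refine ⟨η, Module.End.mem_eigenspace_iff.mpr ?_, ?_⟩
      · rw [hf, Matrix.mulVecLin_apply, hη]
      · intro h0
        apply hsum
        rw [h0]
        simp
  choose xs hxs using hex
  have hli : LinearIndependent ℝ xs := Module.End.eigenvectors_linearIndependent f T xs hxs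
  have hfinT : T.Finite := Set.finite_coe_iff.mp hli.finite
  have hfinS : S.Finite := hfinT.subset (Set.subset_insert _ _)
  refine ⟨hfinS, ?_⟩
  have hTcard : T.ncard ≤ k := by
    haveI := hfinT.fintype
    have h1 : Fintype.card T ≤ Module.finrank ℝ (Fin k → ℝ) :=
      hli.fintype_card_le_finrank
    rw [Module.finrank_fin_fun] at h1
    rwa [Set.ncard_eq_toFinset_card' T, Set.toFinset_card]
  have hlt : S.ncard < T.ncard := Set.ncard_lt_ncard (Set.ssubset_insert hneg2) hfinT
  omega
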